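/- Let T be a collection of countable closed bounded subsets of ω₁, closed under taking closed initial segments, and ordered by s ≤ t iff s is an initial segment of t (i.e., s = t ∩ (sup s + 1)). Suppose that whenever s, t ∈ T have the same supremum δ and lim(s) ∩ lim(t) is unbounded in δ, then s = t. Then T contains at most one uncountable chain that is downward closed and whose union is unbounded in ω₁; more precisely, if b and b' are two such chains, then b = b'. -/

import Mathlib

open Ordinal Set

/-- The set of limit points of a set `s` of ordinals: ordinals `ν > 0` that are
limits of elements of `s` below `ν`. -/
def limPts (s : Set Ordinal) : Set Ordinal :=
  {ν | 0 < ν ∧ sSup (s ∩ Set.Iio ν) = ν}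

/-- `s` is an initial segment of `t`, i.e. `s = t ∩ (sup s + 1)`. -/
def InitSeg (s t : Set Ordinal) : Prop :=
  s = t ∩ Set.Iic (sSup s)

/-- `s` is unbounded in `δ`. -/
def UnbIn (δ : Ordinal) (s : Set Ordinal) : Prop :=
  ∀ α < δ, ∃ β ∈ s, α < β ∧ β < δ

/-- `T` is a collection of countable closed bounded subsets of `ω₁` closed
under taking closed initial segments. -/
def IsSegTree (T : Set (Set Ordinal)) : Prop :=
  (∀ t ∈ T, t.Countable ∧ t ⊆ Set.Iio ω₁ ∧ (∀ x ⊆ t, x.Nonempty → sSup x ∈ t)) ∧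
  (∀ t ∈ T, ∀ α : Ordinal, t ∩ Set.Iic α ∈ T)

/-- An uncountable path through `T`: a downward-closed chain (under the
initial-segment order) whose union is unbounded in `ω₁`. -/
def IsPath (T b : Set (Set Ordinal)) : Prop :=
  b ⊆ T ∧ (∀ s ∈ b, ∀ t ∈ b, InitSeg s t ∨ InitSeg t s) ∧
  (∀ t ∈ b, ∀ s ∈ T, InitSeg s t → s ∈ b) ∧
  (∀ α < ω₁, ∃ β ∈ ⋃₀ b, α < β)

section Aux

lemma bddAbove_of_subset_Iio {s : Set Ordinal} (h : s ⊆ Set.Iio ω₁) : BddAbove s :=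
  ⟨ω₁, fun _ hx => (h hx).le⟩

lemma csSup_lt_omega1 {s : Set Ordinal} (hc : s.Countable) (hsub : s ⊆ Set.Iio ω₁) :
    sSup s < ω₁ := by
  rcases s.eq_empty_or_nonempty with rfl | hne
  · simpa [csSup_empty] using omega_pos 1
  · obtain ⟨f, rfl⟩ := hc.exists_eq_range hne
    have : (⨆ n, f n) < ω₁ := by
      rw [← Cardinal.ord_aleph 1]
      exact (Cardinal.ord_aleph 1).symm ▸ Ordinal.iSup_lt_omega_one (f := f) fun n => hsub (mem_range_self n)
    exact this

variable {T b b' : Set (Set Ordinal)}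

lemma path_sub_Iio (hT : IsSegTree T) (hb : IsPath T b) : ⋃₀ b ⊆ Set.Iio ω₁ := by
  rintro x ⟨t, htb, hxt⟩
  exact (hT.1 t (hb.1 htb)).2.1 hxt

lemma path_exists_sup_ge (hT : IsSegTree T) (hb : IsPath T b) {δ : Ordinal} (hδ : δ < ω₁) :
    ∃ t ∈ b, δ ≤ sSup t := by
  obtain ⟨β, ⟨t, htb, hβt⟩, hβ⟩ := hb.2.2.2 δ hδ
  exact ⟨t, htb, hβ.le.trans (le_csSup (bddAbove_of_subset_Iio (hT.1 t (hb.1 htb)).2.1) hβt)⟩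

lemma path_seg_mem (hT : IsSegTree T) (hb : IsPath T b) {t : Set Ordinal} (ht : t ∈ b)
    (δ : Ordinal) : t ∩ Set.Iic δ ∈ b := by
  refine hb.2.2.1 t ht _ (hT.2 t (hb.1 ht) δ) ?_
  have hbdd : BddAbove (t ∩ Set.Iic δ) := ⟨δ, fun y hy => hy.2⟩
  have hle : sSup (t ∩ Set.Iic δ) ≤ δ := csSup_le' fun y hy => hy.2
  ext x
  constructor
  · rintro ⟨hxt, hxδ⟩
    exact ⟨hxt, le_csSup hbdd ⟨hxt, hxδ⟩⟩
  · rintro ⟨hxt, hxs⟩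
    exact ⟨hxt, hxs.trans hle⟩

lemma path_union_seg (hT : IsSegTree T) (hb : IsPath T b) {t : Set Ordinal} (ht : t ∈ b) :
    ⋃₀ b ∩ Set.Iic (sSup t) = t := by
  ext x
  constructor
  · rintro ⟨⟨u, hub, hxu⟩, hx⟩
    rcases hb.2.1 u hub t ht with h | h
    · exact (inter_subset_left (s := t)) (h ▸ hxu)
    · rw [h]; exact ⟨hxu, hx⟩
  · intro hxt
    exact ⟨⟨t, ht, hxt⟩, le_csSup (bddAbove_of_subset_Iio (hT.1 t (hb.1 ht)).2.1) hxt⟩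

lemma path_union_seg' (hT : IsSegTree T) (hb : IsPath T b) {t : Set Ordinal} (ht : t ∈ b)
    {δ : Ordinal} (hδ : δ ≤ sSup t) : ⋃₀ b ∩ Set.Iic δ = t ∩ Set.Iic δ := by
  have h := path_union_seg hT hb ht
  ext x
  constructor
  · rintro ⟨hxA, hxδ⟩
    exact ⟨(h ▸ ⟨hxA, hxδ.trans hδ⟩ : x ∈ t), hxδ⟩
  · rintro ⟨hxt, hxδ⟩
    exact ⟨⟨t, ht, hxt⟩, hxδ⟩

lemma path_closed (hT : IsSegTree T) (hb : IsPath T b) {ν : Ordinal} (hν : ν < ω₁)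
    (h0 : 0 < ν) (hs : sSup (⋃₀ b ∩ Set.Iio ν) = ν) : ν ∈ ⋃₀ b := by
  obtain ⟨t, htb, hνt⟩ := path_exists_sup_ge hT hb hν
  have hEq : ⋃₀ b ∩ Set.Iio ν = t ∩ Set.Iio ν := by
    have h := path_union_seg hT hb htb
    ext x
    constructor
    · rintro ⟨hxA, hxν⟩
      exact ⟨(h ▸ ⟨hxA, hxν.le.trans hνt⟩ : x ∈ t), hxν⟩
    · rintro ⟨hxt, hxν⟩
      exact ⟨⟨t, htb, hxt⟩, hxν⟩
  have hne : (t ∩ Set.Iio ν).Nonempty := by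
    rw [nonempty_iff_ne_empty]
    intro h
    rw [hEq, h, csSup_empty] at hs
    exact h0.ne' (by simpa using hs.symm)
  have := (hT.1 t (hb.1 htb)).2.2 (t ∩ Set.Iio ν) inter_subset_left hne
  rw [← hEq, hs] at this
  exact ⟨t, htb, this⟩

lemma path_unbounded (hT : IsSegTree T) (hb : IsPath T b) {α : Ordinal} (hα : α < ω₁) :
    ∃ β ∈ ⋃₀ b, α < β ∧ β < ω₁ := by
  obtain ⟨β, hβA, hβ⟩ := hb.2.2.2 α hα
  exact ⟨β, hβA, hβ, path_sub_Iio hT hb hβA⟩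

end Aux

section Club
variable {T b b' : Set (Set Ordinal)}

lemma limPts_inter_Iic {A : Set Ordinal} {δ ν : Ordinal} (hν : ν ∈ limPts A) (hνδ : ν ≤ δ) :
    ν ∈ limPts (A ∩ Set.Iic δ) := by
  refine ⟨hν.1, ?_⟩
  have : A ∩ Set.Iic δ ∩ Set.Iio ν = A ∩ Set.Iio ν := by
    ext x
    exact ⟨fun h => ⟨h.1.1, h.2⟩, fun h => ⟨⟨h.1, h.2.le.trans hνδ⟩, h.2⟩⟩
  rw [this]
  exact hν.2

lemma exists_club_point (hT : IsSegTree T) (hb : IsPath T b) (hb' : IsPath T b')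
    {α : Ordinal} (hα : α < ω₁) :
    ∃ δ, α < δ ∧ δ < ω₁ ∧ δ ∈ limPts (⋃₀ b) ∧ δ ∈ limPts (⋃₀ b') := by
  have hFex : ∀ γ : Ordinal, ∃ a : Ordinal, γ < ω₁ → a ∈ ⋃₀ b ∧ γ < a ∧ a < ω₁ := by
    intro γ
    by_cases hγ : γ < ω₁
    · obtain ⟨β, h1, h2, h3⟩ := path_unbounded hT hb hγ
      exact ⟨β, fun _ => ⟨h1, h2, h3⟩⟩
    · exact ⟨0, fun h => absurd h hγ⟩
  have hF'ex : ∀ γ : Ordinal, ∃ a : Ordinal, γ < ω₁ → a ∈ ⋃₀ b' ∧ γ < a ∧ a < ω₁ := by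
    intro γ
    by_cases hγ : γ < ω₁
    · obtain ⟨β, h1, h2, h3⟩ := path_unbounded hT hb' hγ
      exact ⟨β, fun _ => ⟨h1, h2, h3⟩⟩
    · exact ⟨0, fun h => absurd h hγ⟩
  choose F hF using hFex
  choose F' hF' using hF'ex
  set h : ℕ → Ordinal := fun n => Nat.rec α (fun _ x => max (F x) (F' x)) n with hh
  have h0 : h 0 = α := rfl
  have hsucc : ∀ n, h (n + 1) = max (F (h n)) (F' (h n)) := fun n => rfl
  have hω : ∀ n, h n < ω₁ := by
    intro n
    induction n with
    | zero => exact hα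
    | succ n ih =>
      rw [hsucc]
      exact max_lt (hF (h n) ih).2.2 (hF' (h n) ih).2.2
  have hmono : ∀ n, h n < h (n + 1) := fun n =>
    lt_of_lt_of_le (hF (h n) (hω n)).2.1 ((hsucc n).symm ▸ le_max_left _ _)
  set δ := ⨆ n, h n with hδ
  have hbdd : BddAbove (range h) := by
    refine ⟨ω₁, ?_⟩
    rintro y ⟨n, rfl⟩
    exact (hω n).le
  have hlt : ∀ n, h n < δ := fun n => (hmono n).trans_le (le_ciSup hbdd (n + 1))
  have hδω : δ < ω₁ := by
    rw [hδ, ← Cardinal.ord_aleph 1]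
    exact (Cardinal.ord_aleph 1).symm ▸ Ordinal.iSup_lt_omega_one (f := h) fun n => hω n
  have hαδ : α < δ := h0 ▸ hlt 0
  have hbA : BddAbove (⋃₀ b ∩ Set.Iio δ) := ⟨δ, fun y hy => hy.2.le⟩
  have hbA' : BddAbove (⋃₀ b' ∩ Set.Iio δ) := ⟨δ, fun y hy => hy.2.le⟩
  refine ⟨δ, hαδ, hδω, ⟨lt_of_le_of_lt (zero_le (a := α)) hαδ, ?_⟩,
    ⟨lt_of_le_of_lt (zero_le (a := α)) hαδ, ?_⟩⟩
  · refine le_antisymm (csSup_le' fun y hy => hy.2.le) ?_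
    refine ciSup_le' fun n => ?_
    have hFn : F (h n) ∈ ⋃₀ b ∩ Set.Iio δ :=
      ⟨(hF (h n) (hω n)).1, lt_of_le_of_lt ((hsucc n).symm ▸ le_max_left _ _) (hlt (n + 1))⟩
    exact le_trans (hF (h n) (hω n)).2.1.le (le_csSup hbA hFn)
  · refine le_antisymm (csSup_le' fun y hy => hy.2.le) ?_
    refine ciSup_le' fun n => ?_
    have hFn : F' (h n) ∈ ⋃₀ b' ∩ Set.Iio δ :=
      ⟨(hF' (h n) (hω n)).1, lt_of_le_of_lt ((hsucc n).symm ▸ le_max_right _ _) (hlt (n + 1))⟩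
    exact le_trans (hF' (h n) (hω n)).2.1.le (le_csSup hbA' hFn)

lemma exists_good_delta (hT : IsSegTree T) (hb : IsPath T b) (hb' : IsPath T b')
    {α : Ordinal} (hα : α < ω₁) :
    ∃ δ, α < δ ∧ δ < ω₁ ∧ δ ∈ limPts (⋃₀ b) ∧ δ ∈ limPts (⋃₀ b') ∧
      UnbIn δ (limPts (⋃₀ b ∩ Set.Iic δ) ∩ limPts (⋃₀ b' ∩ Set.Iic δ)) := by
  have hGex : ∀ γ : Ordinal, ∃ a : Ordinal, γ < ω₁ →
      γ < a ∧ a < ω₁ ∧ a ∈ limPts (⋃₀ b) ∧ a ∈ limPts (⋃₀ b') := by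
    intro γ
    by_cases hγ : γ < ω₁
    · obtain ⟨δ, h1, h2, h3, h4⟩ := exists_club_point hT hb hb' hγ
      exact ⟨δ, fun _ => ⟨h1, h2, h3, h4⟩⟩
    · exact ⟨0, fun h => absurd h hγ⟩
  choose G hG using hGex
  set k : ℕ → Ordinal := fun n => Nat.rec (G α) (fun _ x => G x) n with hk
  have k0 : k 0 = G α := rfl
  have ksucc : ∀ n, k (n + 1) = G (k n) := fun n => rfl
  have hω : ∀ n, k n < ω₁ := by
    intro n
    induction n with
    | zero => exact (hG α hα).2.1
    | succ n ih => rw [ksucc]; exact (hG (k n) ih).2.1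
  have hmono : ∀ n, k n < k (n + 1) := fun n => (ksucc n).symm ▸ (hG (k n) (hω n)).1
  have hlim : ∀ n, k n ∈ limPts (⋃₀ b) ∧ k n ∈ limPts (⋃₀ b') := by
    intro n
    induction n with
    | zero => exact ⟨(hG α hα).2.2.1, (hG α hα).2.2.2⟩
    | succ n ih => rw [ksucc]; exact ⟨(hG (k n) (hω n)).2.2.1, (hG (k n) (hω n)).2.2.2⟩
  have hmem : ∀ n, k n ∈ ⋃₀ b := fun n =>
    path_closed hT hb (hω n) (hlim n).1.1 (hlim n).1.2
  have hmem' : ∀ n, k n ∈ ⋃₀ b' := fun n =>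
    path_closed hT hb' (hω n) (hlim n).2.1 (hlim n).2.2
  set δ := ⨆ n, k n with hδ
  have hbdd : BddAbove (range k) := by
    refine ⟨ω₁, ?_⟩
    rintro y ⟨n, rfl⟩
    exact (hω n).le
  have hlt : ∀ n, k n < δ := fun n => (hmono n).trans_le (le_ciSup hbdd (n + 1))
  have hδω : δ < ω₁ := by
    rw [hδ, ← Cardinal.ord_aleph 1]
    exact (Cardinal.ord_aleph 1).symm ▸ Ordinal.iSup_lt_omega_one (f := k) fun n => hω n
  have hαδ : α < δ := lt_of_lt_of_le (hG α hα).1 (k0 ▸ (hlt 0).le)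
  have h0δ : 0 < δ := lt_of_le_of_lt (zero_le (a := α)) hαδ
  have hbA : BddAbove (⋃₀ b ∩ Set.Iio δ) := ⟨δ, fun y hy => hy.2.le⟩
  have hbA' : BddAbove (⋃₀ b' ∩ Set.Iio δ) := ⟨δ, fun y hy => hy.2.le⟩
  refine ⟨δ, hαδ, hδω, ⟨h0δ, ?_⟩, ⟨h0δ, ?_⟩, ?_⟩
  · refine le_antisymm (csSup_le' fun y hy => hy.2.le) ?_
    exact ciSup_le' fun n => le_csSup hbA ⟨hmem n, hlt n⟩
  · refine le_antisymm (csSup_le' fun y hy => hy.2.le) ?_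
    exact ciSup_le' fun n => le_csSup hbA' ⟨hmem' n, hlt n⟩
  · intro β hβ
    have : ∃ n, β < k n := by
      by_contra hcon
      push_neg at hcon
      exact absurd (ciSup_le' hcon : δ ≤ β) (not_le.mpr hβ)
    obtain ⟨n, hn⟩ := this
    exact ⟨k n, ⟨limPts_inter_Iic (hlim n).1 (hlt n).le,
      limPts_inter_Iic (hlim n).2 (hlt n).le⟩, hn, hlt n⟩

end Club

section Final
variable {T b b' : Set (Set Ordinal)}

lemma path_union_subset (hT : IsSegTree T)
    (had : ∀ s ∈ T, ∀ t ∈ T, sSup s = sSup t →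
      UnbIn (sSup s) (limPts s ∩ limPts t) → s = t)
    (hb : IsPath T b) (hb' : IsPath T b') : ⋃₀ b ⊆ ⋃₀ b' := by
  intro x hx
  have hxω : x < ω₁ := path_sub_Iio hT hb hx
  obtain ⟨δ, hxδ, hδω, hA, hA', hunb⟩ := exists_good_delta hT hb hb' hxω
  have hδA : δ ∈ ⋃₀ b := path_closed hT hb hδω hA.1 hA.2
  have hδA' : δ ∈ ⋃₀ b' := path_closed hT hb' hδω hA'.1 hA'.2
  -- the two segments at level δ
  obtain ⟨t, htb, hδt⟩ := path_exists_sup_ge hT hb hδω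
  obtain ⟨t', htb', hδt'⟩ := path_exists_sup_ge hT hb' hδω
  have hsb : ⋃₀ b ∩ Set.Iic δ ∈ b := by
    rw [path_union_seg' hT hb htb hδt]
    exact path_seg_mem hT hb htb δ
  have hsb' : ⋃₀ b' ∩ Set.Iic δ ∈ b' := by
    rw [path_union_seg' hT hb' htb' hδt']
    exact path_seg_mem hT hb' htb' δ
  have hbddδ : BddAbove (⋃₀ b ∩ Set.Iic δ) := ⟨δ, fun y hy => hy.2⟩
  have hbddδ' : BddAbove (⋃₀ b' ∩ Set.Iic δ) := ⟨δ, fun y hy => hy.2⟩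
  have hsups : sSup (⋃₀ b ∩ Set.Iic δ) = δ :=
    le_antisymm (csSup_le' fun y hy => hy.2) (le_csSup hbddδ ⟨hδA, le_refl δ⟩)
  have hsups' : sSup (⋃₀ b' ∩ Set.Iic δ) = δ :=
    le_antisymm (csSup_le' fun y hy => hy.2) (le_csSup hbddδ' ⟨hδA', le_refl δ⟩)
  have heq : ⋃₀ b ∩ Set.Iic δ = ⋃₀ b' ∩ Set.Iic δ := by
    refine had _ (hb.1 hsb) _ (hb'.1 hsb') (by rw [hsups, hsups']) ?_
    rw [hsups]
    exact hunb
  have : x ∈ ⋃₀ b' ∩ Set.Iic δ := heq ▸ ⟨hx, hxδ.le⟩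
  exact this.1

lemma path_subset (hT : IsSegTree T) (hb : IsPath T b) (hb' : IsPath T b')
    (hU : ⋃₀ b = ⋃₀ b') : b ⊆ b' := by
  intro s hs
  have hsT := hb.1 hs
  have hsup : sSup s < ω₁ := csSup_lt_omega1 (hT.1 s hsT).1 (hT.1 s hsT).2.1
  obtain ⟨t, htb', hst⟩ := path_exists_sup_ge hT hb' hsup
  have h1 : s = ⋃₀ b ∩ Set.Iic (sSup s) := (path_union_seg hT hb hs).symm
  have h2 : ⋃₀ b' ∩ Set.Iic (sSup s) = t ∩ Set.Iic (sSup s) :=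
    path_union_seg' hT hb' htb' hst
  rw [h1, hU, h2]
  exact path_seg_mem hT hb' htb' (sSup s)

end Final

/-- If elements of `T` with the same supremum whose limit-point sets have
unbounded intersection in that supremum coincide, then `T` has at most one
uncountable path. -/
theorem at_most_one_path (T : Set (Set Ordinal)) (hT : IsSegTree T)
    (had : ∀ s ∈ T, ∀ t ∈ T, sSup s = sSup t →
      UnbIn (sSup s) (limPts s ∩ limPts t) → s = t)
    (b b' : Set (Set Ordinal)) (hb : IsPath T b) (hb' : IsPath T b') :
    b = b' := by
  have hU : ⋃₀ b = ⋃₀ b' :=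
    subset_antisymm (path_union_subset hT had hb hb') (path_union_subset hT had hb' hb)
  exact subset_antisymm (path_subset hT hb hb' hU) (path_subset hT hb' hb hU.symm)
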